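/- On a Riemannian manifold of dimension n ≥ 3, the Cotton tensor C_{ijk} = ∇_k R_{ij} - ∇_j R_{ik} - (1/(2(n-1)))(∇_k R·g_{ij} - ∇_j R·g_{ik}) satisfies the pointwise identity (1/2)|C|² = |∇E|² - ((n-2)²/(4n²(n-1)))|∇R|² - ∇_k E_{ij}·∇_j E_{ik}, where E is the trace-free Ricci tensor. -/
import Mathlib


open Finset

/-- Pointwise Cotton identity in an orthonormal frame: with
`C_{ijk} = ∇_k R_{ij} - ∇_j R_{ik} - (1/(2(n-1)))(∇_k R·δ_{ij} - ∇_j R·δ_{ik})` and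
`∇_k E_{ij} = ∇_k R_{ij} - (1/n)∇_k R·δ_{ij}`, one has
`(1/2)|C|² = |∇E|² - ((n-2)²/(4n²(n-1)))|∇R|² - ∇_k E_{ij}∇_j E_{ik}`. -/
theorem cotton_pointwise_identity (n : ℕ) (hn : 3 ≤ n)
    (DRic : Fin n → Fin n → Fin n → ℝ) (DR : Fin n → ℝ)
    (hsymm : ∀ k i j, DRic k i j = DRic k j i)
    (htrace : ∀ k, ∑ i, DRic k i i = DR k)
    (hBianchi : ∀ j, ∑ i, DRic i i j = (1 / 2) * DR j)
    (C : Fin n → Fin n → Fin n → ℝ)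
    (hC : ∀ i j k, C i j k = DRic k i j - DRic j i k
      - 1 / (2 * ((n : ℝ) - 1)) * (DR k * (if i = j then (1 : ℝ) else 0)
          - DR j * (if i = k then (1 : ℝ) else 0)))
    (DE : Fin n → Fin n → Fin n → ℝ)
    (hDE : ∀ k i j, DE k i j
      = DRic k i j - 1 / (n : ℝ) * DR k * (if i = j then (1 : ℝ) else 0)) :
    (1 / 2) * ∑ i, ∑ j, ∑ k, (C i j k) ^ 2
      = (∑ k, ∑ i, ∑ j, (DE k i j) ^ 2)
        - ((n : ℝ) - 2) ^ 2 / (4 * n ^ 2 * ((n : ℝ) - 1)) * ∑ j, (DR j) ^ 2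
        - ∑ i, ∑ j, ∑ k, DE k i j * DE j i k := by
  have h3 : (3 : ℝ) ≤ (n : ℝ) := by exact_mod_cast hn
  have hn0 : (n : ℝ) ≠ 0 := by linarith
  have hn1 : (n : ℝ) - 1 ≠ 0 := by linarith
  -- elementary sums
  have hSbb : (∑ i, ∑ j, ∑ k, DRic j i k ^ 2) = ∑ i, ∑ j, ∑ k, DRic k i j ^ 2 := by
    refine Finset.sum_congr rfl fun i _ => ?_
    exact Finset.sum_comm
  have hSapd : (∑ i, ∑ j, ∑ k, DRic k i j * DR k * (if i = j then (1:ℝ) else 0))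
      = ∑ j, DR j ^ 2 := by
    have h1 : ∀ i : Fin n, (∑ j, ∑ k, DRic k i j * DR k * (if i = j then (1:ℝ) else 0))
        = ∑ k, DRic k i i * DR k := by
      intro i; simp [mul_ite]
    rw [Finset.sum_congr rfl fun i _ => h1 i, Finset.sum_comm]
    refine Finset.sum_congr rfl fun k _ => ?_
    rw [← Finset.sum_mul, htrace, sq]
  have hSaqe : (∑ i, ∑ j, ∑ k, DRic k i j * DR j * (if i = k then (1:ℝ) else 0))
      = (1/2) * ∑ j, DR j ^ 2 := by
    have h1 : ∀ i : Fin n, (∑ j, ∑ k, DRic k i j * DR j * (if i = k then (1:ℝ) else 0))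
        = ∑ j, DRic i i j * DR j := by
      intro i; refine Finset.sum_congr rfl fun j _ => ?_
      simp [mul_ite]
    rw [Finset.sum_congr rfl fun i _ => h1 i, Finset.sum_comm, Finset.mul_sum]
    refine Finset.sum_congr rfl fun j _ => ?_
    rw [← Finset.sum_mul, hBianchi, sq]; ring
  have hSbpd : (∑ i, ∑ j, ∑ k, DRic j i k * DR k * (if i = j then (1:ℝ) else 0))
      = (1/2) * ∑ j, DR j ^ 2 := by
    have h1 : ∀ i : Fin n, (∑ j, ∑ k, DRic j i k * DR k * (if i = j then (1:ℝ) else 0))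
        = ∑ k, DRic i i k * DR k := by
      intro i; simp [mul_ite]
    rw [Finset.sum_congr rfl fun i _ => h1 i, Finset.sum_comm, Finset.mul_sum]
    refine Finset.sum_congr rfl fun k _ => ?_
    rw [← Finset.sum_mul, hBianchi, sq]; ring
  have hSbqe : (∑ i, ∑ j, ∑ k, DRic j i k * DR j * (if i = k then (1:ℝ) else 0))
      = ∑ j, DR j ^ 2 := by
    have h1 : ∀ i : Fin n, (∑ j, ∑ k, DRic j i k * DR j * (if i = k then (1:ℝ) else 0))
        = ∑ j, DRic j i i * DR j := by
      intro i; refine Finset.sum_congr rfl fun j _ => ?_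
      simp [mul_ite]
    rw [Finset.sum_congr rfl fun i _ => h1 i, Finset.sum_comm]
    refine Finset.sum_congr rfl fun j _ => ?_
    rw [← Finset.sum_mul, htrace, sq]
  have hSppdd : (∑ i : Fin n, ∑ j : Fin n, ∑ k, (DR k * (if i = j then (1:ℝ) else 0)) ^ 2)
      = (n : ℝ) * ∑ j, DR j ^ 2 := by
    have h1 : ∀ (i j : Fin n) (k : Fin n),
        (DR k * (if i = j then (1:ℝ) else 0)) ^ 2
          = DR k ^ 2 * (if i = j then (1:ℝ) else 0) := by
      intro i j k; split <;> ring
    simp only [h1]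
    have h2 : ∀ i : Fin n, (∑ j : Fin n, ∑ k, DR k ^ 2 * (if i = j then (1:ℝ) else 0))
        = ∑ k, DR k ^ 2 := by
      intro i; simp [mul_ite]
    rw [Finset.sum_congr rfl fun i _ => h2 i]
    simp [Finset.sum_const, Finset.card_univ, nsmul_eq_mul]
  have hSqqee : (∑ i : Fin n, ∑ j, ∑ k : Fin n, (DR j * (if i = k then (1:ℝ) else 0)) ^ 2)
      = (n : ℝ) * ∑ j, DR j ^ 2 := by
    have h1 : ∀ (i j k : Fin n),
        (DR j * (if i = k then (1:ℝ) else 0)) ^ 2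
          = DR j ^ 2 * (if i = k then (1:ℝ) else 0) := by
      intro i j k; split <;> ring
    simp only [h1]
    have h2 : ∀ i : Fin n, (∑ j, ∑ k : Fin n, DR j ^ 2 * (if i = k then (1:ℝ) else 0))
        = ∑ j, DR j ^ 2 := by
      intro i
      refine Finset.sum_congr rfl fun j _ => ?_
      simp [mul_ite]
    rw [Finset.sum_congr rfl fun i _ => h2 i]
    simp [Finset.sum_const, Finset.card_univ, nsmul_eq_mul]
  have hSpqde : (∑ i, ∑ j, ∑ k,
        (DR k * (if i = j then (1:ℝ) else 0)) * (DR j * (if i = k then (1:ℝ) else 0)))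
      = ∑ j, DR j ^ 2 := by
    have h1 : ∀ i : Fin n, (∑ j, ∑ k,
        (DR k * (if i = j then (1:ℝ) else 0)) * (DR j * (if i = k then (1:ℝ) else 0)))
        = DR i ^ 2 := by
      intro i
      have h2 : ∀ j : Fin n, (∑ k,
          (DR k * (if i = j then (1:ℝ) else 0)) * (DR j * (if i = k then (1:ℝ) else 0)))
          = DR i * (if i = j then (1:ℝ) else 0) * DR j := by
        intro j
        have : ∀ k : Fin n,
            (DR k * (if i = j then (1:ℝ) else 0)) * (DR j * (if i = k then (1:ℝ) else 0))
            = (DR k * (if i = j then (1:ℝ) else 0) * DR j) * (if i = k then (1:ℝ) else 0) := by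
          intro k; ring
        simp only [this]
        simp [mul_ite]
      simp only [h2]
      simp [mul_ite, sq]
    rw [Finset.sum_congr rfl fun i _ => h1 i]
  -- sum order commutation
  have hcomm : ∀ f : Fin n → Fin n → Fin n → ℝ,
      (∑ k, ∑ i, ∑ j, f k i j) = ∑ i, ∑ j, ∑ k, f k i j := by
    intro f
    rw [Finset.sum_comm]
    exact Finset.sum_congr rfl fun i _ => Finset.sum_comm
  -- expansion of |C|^2
  have keyC : (∑ i, ∑ j, ∑ k, (C i j k) ^ 2)
      = 2 * (∑ i, ∑ j, ∑ k, DRic k i j ^ 2)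
        - 2 * (∑ i, ∑ j, ∑ k, DRic k i j * DRic j i k)
        - 2 * (1 / (2 * ((n:ℝ) - 1))) * (∑ j, DR j ^ 2)
        + 2 * (1 / (2 * ((n:ℝ) - 1))) ^ 2 * ((n:ℝ) - 1) * (∑ j, DR j ^ 2) := by
    have hexp : ∀ i j k, (C i j k) ^ 2 =
        DRic k i j ^ 2 + DRic j i k ^ 2
        - 2 * (DRic k i j * DRic j i k)
        - 2 * (1 / (2 * ((n:ℝ) - 1))) * (DRic k i j * DR k * (if i = j then (1:ℝ) else 0))
        + 2 * (1 / (2 * ((n:ℝ) - 1))) * (DRic k i j * DR j * (if i = k then (1:ℝ) else 0))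
        + 2 * (1 / (2 * ((n:ℝ) - 1))) * (DRic j i k * DR k * (if i = j then (1:ℝ) else 0))
        - 2 * (1 / (2 * ((n:ℝ) - 1))) * (DRic j i k * DR j * (if i = k then (1:ℝ) else 0))
        + (1 / (2 * ((n:ℝ) - 1))) ^ 2 * ((DR k * (if i = j then (1:ℝ) else 0)) ^ 2)
        + (1 / (2 * ((n:ℝ) - 1))) ^ 2 * ((DR j * (if i = k then (1:ℝ) else 0)) ^ 2)
        - 2 * (1 / (2 * ((n:ℝ) - 1))) ^ 2 *
            ((DR k * (if i = j then (1:ℝ) else 0)) * (DR j * (if i = k then (1:ℝ) else 0))) := by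
      intro i j k; rw [hC]; ring
    simp only [hexp]
    simp only [Finset.sum_add_distrib, Finset.sum_sub_distrib, ← Finset.mul_sum]
    rw [hSbb, hSapd, hSaqe, hSbpd, hSbqe, hSppdd, hSqqee, hSpqde]
    ring
  -- expansion of |DE|^2
  have keyE : (∑ k, ∑ i, ∑ j, (DE k i j) ^ 2)
      = (∑ i, ∑ j, ∑ k, DRic k i j ^ 2) - (1 / (n:ℝ)) * (∑ j, DR j ^ 2) := by
    have hexp : ∀ k i j, (DE k i j) ^ 2 =
        DRic k i j ^ 2
        - 2 * (1 / (n:ℝ)) * (DRic k i j * DR k * (if i = j then (1:ℝ) else 0))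
        + (1 / (n:ℝ)) ^ 2 * ((DR k * (if i = j then (1:ℝ) else 0)) ^ 2) := by
      intro k i j; rw [hDE]; ring
    calc (∑ k, ∑ i, ∑ j, (DE k i j) ^ 2) = ∑ i, ∑ j, ∑ k, (DE k i j) ^ 2 :=
          hcomm fun k i j => (DE k i j) ^ 2
      _ = _ := by
        simp only [hexp]
        simp only [Finset.sum_add_distrib, Finset.sum_sub_distrib, ← Finset.mul_sum]
        rw [hSapd, hSppdd]
        field_simp
        ring
  -- expansion of the cross term
  have keyQ : (∑ i, ∑ j, ∑ k, DE k i j * DE j i k)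
      = (∑ i, ∑ j, ∑ k, DRic k i j * DRic j i k)
        - (1 / (n:ℝ)) * (∑ j, DR j ^ 2) + (1 / (n:ℝ)) ^ 2 * (∑ j, DR j ^ 2) := by
    have hexp : ∀ i j k, DE k i j * DE j i k =
        DRic k i j * DRic j i k
        - (1 / (n:ℝ)) * (DRic k i j * DR j * (if i = k then (1:ℝ) else 0))
        - (1 / (n:ℝ)) * (DRic j i k * DR k * (if i = j then (1:ℝ) else 0))
        + (1 / (n:ℝ)) ^ 2 *
            ((DR k * (if i = j then (1:ℝ) else 0)) * (DR j * (if i = k then (1:ℝ) else 0))) := by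
      intro i j k; rw [hDE, hDE]; ring
    simp only [hexp]
    simp only [Finset.sum_add_distrib, Finset.sum_sub_distrib, ← Finset.mul_sum]
    rw [hSaqe, hSbpd, hSpqde]
    ring
  rw [keyC, keyE, keyQ]
  field_simp
  ring
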